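/- Let S be a multiplicative monoid with a monoid spine T, A a semiring with additive spine N, and R = A[S] the monoid semiring. Then N·T is an additive spine of A[S]. -/

import Mathlib

def halo (R : Type*) {V : Type*} [Semiring R] [AddCommMonoid V] [Module R V]
    (S : Set V) : Set V :=
  {v | ∃ l m : R, l • v ∈ S ∧ m • (l • v) = v}

def IsAdditiveSpine (R : Type*) {V : Type*} [Semiring R] [AddCommMonoid V] [Module R V]
    (S : Set V) : Prop :=
  AddSubmonoid.closure (halo R S) = ⊤

/-- `T` is a monoid spine of `S`. -/
def IsMonoidSpine {S : Type*} [Monoid S] (T : Set S) : Prop :=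
  ∀ s : S, ∃ s₁ s₂ : S, s₁ * s ∈ T ∧ s₂ * (s₁ * s) = s

theorem monoid_algebra_spine {A S : Type*} [Semiring A] [Monoid S]
    (T : Set S) (hT : IsMonoidSpine T) (N : Set A) (hN : IsAdditiveSpine A N) :
    IsAdditiveSpine (MonoidAlgebra A S)
      {x : MonoidAlgebra A S | ∃ a ∈ N, ∃ t ∈ T, x = MonoidAlgebra.single t a} := by
  set M : Set (MonoidAlgebra A S) :=
    {x : MonoidAlgebra A S | ∃ a ∈ N, ∃ t ∈ T, x = MonoidAlgebra.single t a}
  have key : ∀ (s : S) (a : A),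
      MonoidAlgebra.single s a ∈ AddSubmonoid.closure (halo (MonoidAlgebra A S) M) := by
    intro s a
    have hA : a ∈ AddSubmonoid.closure (halo A N) := by rw [hN]; trivial
    induction hA using AddSubmonoid.closure_induction with
    | mem b hb =>
        obtain ⟨l, m, hl, hm⟩ := hb
        obtain ⟨s₁, s₂, ht, hs⟩ := hT s
        apply AddSubmonoid.subset_closure
        refine ⟨MonoidAlgebra.single s₁ l, MonoidAlgebra.single s₂ m, ?_, ?_⟩
        · refine ⟨l • b, hl, s₁ * s, ht, ?_⟩
          rw [smul_eq_mul, MonoidAlgebra.single_mul_single, smul_eq_mul]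
        · rw [smul_eq_mul, smul_eq_mul, MonoidAlgebra.single_mul_single,
            MonoidAlgebra.single_mul_single, hs]
          rw [smul_eq_mul, smul_eq_mul] at hm
          rw [hm]
    | zero => simpa using (AddSubmonoid.closure (halo (MonoidAlgebra A S) M)).zero_mem
    | add x y _ _ hx hy =>
        have : MonoidAlgebra.single s (x + y)
            = MonoidAlgebra.single s x + MonoidAlgebra.single s y := MonoidAlgebra.single_add s x y
        rw [this]; exact add_mem hx hy
  rw [IsAdditiveSpine, eq_top_iff]
  intro x _
  induction x using MonoidAlgebra.induction with
  | zero => exact zero_mem _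
  | single_add s a f _ _ ih => exact add_mem (key s a) (ih trivial)
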